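/- Let (K,|·|) be a normed field, f ∈ K[z] a polynomial of degree n ≥ 2 having n simple zeros in K, ξ ∈ Kⁿ a root-vector of f, and 1 ≤ p ≤ ∞ with conjugate exponent q. Suppose the initial guess x⁰ ∈ Kⁿ satisfies E(x⁰) = ‖(x⁰ − ξ)/d(ξ)‖_p < R(n,p) = (2^{1/(n−1)} − 1)/(2^{1/q}(2^{1/(n−1)} − 1) + (n−1)^{−1/p}). Then the Weierstrass iteration x^{k+1} = x^k − W(x^k) is well defined (each x^k has pairwise distinct components), converges to ξ, and for all k ≥ 0 and each index i: |x^{k+1}_i − ξ_i| ≤ λ^{2^k} |x^k_i − ξ_i| and |x^k_i − ξ_i| ≤ λ^{2^k − 1} |x⁰_i − ξ_i|, where λ = φ(E(x⁰)) < 1 and φ(t) = (1 + t/((n−1)^{1/p}(1 − 2^{1/q} t)))^{n−1} − 1. -/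

import Mathlib

open Finset Filter Topology
open scoped ENNReal

noncomputable def pnorm {n : ℕ} (p : ℝ≥0∞) (v : Fin n → ℝ) : ℝ :=
  if p = ⊤ then ⨆ i, |v i| else (∑ i, |v i| ^ p.toReal) ^ (1 / p.toReal)

noncomputable def epow (a : ℝ) (p : ℝ≥0∞) : ℝ :=
  if p = ⊤ then 1 else a ^ (1 / p.toReal)

noncomputable def dsep {K : Type*} [NormedField K] {n : ℕ} (x : Fin n → K) (i : Fin n) : ℝ :=
  sInf {r : ℝ | ∃ j, j ≠ i ∧ r = ‖x i - x j‖}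

noncomputable def Wcorr {K : Type*} [NormedField K] {n : ℕ} (f : Polynomial K)
    (x : Fin n → K) (i : Fin n) : K :=
  Polynomial.eval (x i) f / (f.leadingCoeff * ∏ j ∈ Finset.univ.erase i, (x i - x j))

def IsRootVector {K : Type*} [NormedField K] {n : ℕ} (f : Polynomial K) (ξ : Fin n → K) : Prop :=
  ∀ z : K, Polynomial.eval z f = f.leadingCoeff * ∏ i, (z - ξ i)


namespace WL

variable {p q : ℝ≥0∞}

lemma conj_cases (hp : 1 ≤ p) (hpq : 1 / p + 1 / q = 1) :
    (p = 1 ∧ q = ⊤) ∨ (p = ⊤ ∧ q = 1) ∨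
      (p ≠ ⊤ ∧ q ≠ ⊤ ∧ Real.HolderConjugate p.toReal q.toReal) := by
  simp only [one_div] at hpq
  rcases eq_or_lt_of_le hp with h1 | h1
  · left
    refine ⟨h1.symm, ?_⟩
    rw [← h1, inv_one] at hpq
    have h0 : (1:ℝ≥0∞) + q⁻¹ = 1 + 0 := by simpa using hpq
    have : q⁻¹ = 0 := (ENNReal.add_right_inj ENNReal.one_ne_top).mp h0
    simpa [ENNReal.inv_eq_zero] using this
  rcases eq_or_ne p ⊤ with hptop | hptop
  · right; left
    refine ⟨hptop, ?_⟩
    rw [hptop] at hpq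
    simp at hpq
    simpa [ENNReal.inv_eq_one] using hpq
  · right; right
    have hp0 : p ≠ 0 := by positivity
    have hpinv_lt : p⁻¹ < 1 := by
      rw [ENNReal.inv_lt_one]; exact h1
    have hpinv_pos : 0 < p⁻¹ := ENNReal.inv_pos.mpr hptop
    have hqinv : q⁻¹ = 1 - p⁻¹ := by
      rw [← hpq]; simp [ENNReal.add_sub_cancel_left (by simp [hp0] : p⁻¹ ≠ ⊤)]
    have hqinv_pos : 0 < q⁻¹ := by
      rw [hqinv]; exact tsub_pos_of_lt hpinv_lt
    have hqtop : q ≠ ⊤ := by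
      intro h; rw [h, ENNReal.inv_top] at hqinv_pos; exact lt_irrefl _ hqinv_pos
    have hq0 : q ≠ 0 := by
      intro h; rw [h] at hqinv
      simp only [ENNReal.inv_zero] at hqinv
      have hle : 1 - p⁻¹ ≤ 1 := tsub_le_self
      rw [← hqinv] at hle
      exact absurd hle (by simp)
    refine ⟨hptop, hqtop, Real.holderConjugate_iff.mpr ⟨?_, ?_⟩⟩
    · have : (1:ℝ) < p.toReal := by
        rw [← ENNReal.toReal_one]
        exact ENNReal.toReal_strict_mono hptop h1
      exact this
    · have h1' : p⁻¹ ≠ ⊤ := by simp [hp0]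
      have h2' : q⁻¹ ≠ ⊤ := by simp [hq0]
      have := congrArg ENNReal.toReal hpq
      rw [ENNReal.toReal_add h1' h2', ENNReal.toReal_inv, ENNReal.toReal_inv] at this
      simpa using this

@[simp] lemma epow_top (a : ℝ) : epow a ⊤ = 1 := by simp [epow]

@[simp] lemma epow_one' (a : ℝ) : epow a 1 = a ^ (1:ℝ) := by simp [epow]

lemma epow_nonneg {a : ℝ} (ha : 0 ≤ a) (p : ℝ≥0∞) : 0 ≤ epow a p := by
  unfold epow; split
  · exact zero_le_one
  · exact Real.rpow_nonneg ha _

lemma pnorm_top_eq {n : ℕ} (v : Fin n → ℝ) : pnorm ⊤ v = ⨆ i, |v i| := by simp [pnorm]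

lemma pnorm_one_eq {n : ℕ} (v : Fin n → ℝ) : pnorm 1 v = ∑ i, |v i| := by
  simp [pnorm]

lemma epow_pos {a : ℝ} (ha : 0 < a) (p : ℝ≥0∞) : 0 < epow a p := by
  unfold epow; split
  · exact one_pos
  · exact Real.rpow_pos_of_pos ha _

lemma epow_conj (hp : 1 ≤ p) (hpq : 1 / p + 1 / q = 1) {a : ℝ} (ha : 0 < a) :
    epow a q = a / epow a p := by
  rcases conj_cases hp hpq with ⟨hp1, hq1⟩ | ⟨hp1, hq1⟩ | ⟨hpt, hqt, hc⟩
  · subst hp1 hq1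
    simp [epow, ha.ne']
  · subst hp1 hq1
    simp [epow, ha.ne']
  · have hq0 : q.toReal ≠ 0 := hc.symm.pos.ne'
    have hp0 : p.toReal ≠ 0 := hc.pos.ne'
    have h1 : 1 / q.toReal = 1 - 1 / p.toReal := by
      have := hc.inv_add_inv_eq_one
      field_simp at this ⊢
      linarith
    simp only [epow, hpt, hqt, if_neg, if_false]
    rw [h1, Real.rpow_sub ha, Real.rpow_one]

lemma pnorm_nonneg {n : ℕ} (p : ℝ≥0∞) (v : Fin n → ℝ) : 0 ≤ pnorm p v := by
  unfold pnorm; split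
  · exact Real.iSup_nonneg fun i => abs_nonneg _
  · exact Real.rpow_nonneg (Finset.sum_nonneg fun i _ => Real.rpow_nonneg (abs_nonneg _) _) _

lemma toReal_pos_of_ne_top (hp : 1 ≤ p) (hpt : p ≠ ⊤) : 1 ≤ p.toReal := by
  rw [← ENNReal.toReal_one]
  exact ENNReal.toReal_mono hpt hp

lemma pnorm_le_mul {n : ℕ} (hn : 0 < n) (hp : 1 ≤ p) {s : ℝ} (hs : 0 ≤ s)
    {v w : Fin n → ℝ} (h : ∀ i, |v i| ≤ s * |w i|) : pnorm p v ≤ s * pnorm p w := by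
  haveI : Nonempty (Fin n) := Fin.pos_iff_nonempty.mp hn
  unfold pnorm; split_ifs with hpt
  · refine ciSup_le fun i => (h i).trans ?_
    exact mul_le_mul_of_nonneg_left
      (le_ciSup (f := fun i => |w i|) (Set.Finite.bddAbove (Set.finite_range _)) i) hs
  · have hpr : 1 ≤ p.toReal := toReal_pos_of_ne_top hp hpt
    have hpr0 : (0:ℝ) < p.toReal := lt_of_lt_of_le one_pos hpr
    have hsum : ∑ i, |v i| ^ p.toReal ≤ s ^ p.toReal * ∑ i, |w i| ^ p.toReal := by
      rw [Finset.mul_sum]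
      refine Finset.sum_le_sum fun i _ => ?_
      calc |v i| ^ p.toReal ≤ (s * |w i|) ^ p.toReal :=
            Real.rpow_le_rpow (abs_nonneg _) (h i) hpr0.le
        _ = s ^ p.toReal * |w i| ^ p.toReal := Real.mul_rpow hs (abs_nonneg _)
    calc (∑ i, |v i| ^ p.toReal) ^ (1 / p.toReal)
        ≤ (s ^ p.toReal * ∑ i, |w i| ^ p.toReal) ^ (1 / p.toReal) :=
          Real.rpow_le_rpow (Finset.sum_nonneg fun i _ => Real.rpow_nonneg (abs_nonneg _) _)
            hsum (by positivity)
      _ = s * (∑ i, |w i| ^ p.toReal) ^ (1 / p.toReal) := by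
          rw [Real.mul_rpow (by positivity)
            (Finset.sum_nonneg fun i _ => Real.rpow_nonneg (abs_nonneg _) _),
            ← Real.rpow_mul hs, mul_one_div, div_self hpr0.ne', Real.rpow_one]

lemma holder_sum {n : ℕ} (hp : 1 ≤ p) (hpq : 1 / p + 1 / q = 1)
    {u : Fin n → ℝ} (hu : ∀ i, 0 ≤ u i) (S : Finset (Fin n)) :
    ∑ j ∈ S, u j ≤ epow (S.card : ℝ) q * pnorm p u := by
  rcases S.eq_empty_or_nonempty with rfl | hS
  · simp only [Finset.sum_empty]
    exact mul_nonneg (epow_nonneg (by norm_num) _) (pnorm_nonneg _ _)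
  have hn : 0 < n := by
    rcases hS with ⟨j, _⟩
    exact j.pos
  haveI : Nonempty (Fin n) := Fin.pos_iff_nonempty.mp hn
  have hcard : (0:ℝ) < (S.card : ℝ) := by exact_mod_cast Finset.card_pos.mpr hS
  rcases conj_cases hp hpq with ⟨hp1, hq1⟩ | ⟨hp1, hq1⟩ | ⟨hpt, hqt, hc⟩
  · subst hp1; subst hq1
    rw [epow_top, one_mul, pnorm_one_eq]
    calc ∑ j ∈ S, u j ≤ ∑ j ∈ S, |u j| := Finset.sum_le_sum fun j _ => le_abs_self _
      _ ≤ ∑ j, |u j| := Finset.sum_le_sum_of_subset_of_nonneg (Finset.subset_univ S)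
          (fun j _ _ => abs_nonneg _)
  · subst hp1; subst hq1
    rw [epow_one', pnorm_top_eq, Real.rpow_one]
    calc ∑ j ∈ S, u j ≤ ∑ _j ∈ S, ⨆ i, |u i| := by
          refine Finset.sum_le_sum fun j _ => ?_
          exact (le_abs_self _).trans
            (le_ciSup (f := fun i => |u i|) (Set.Finite.bddAbove (Set.finite_range _)) j)
      _ = (S.card : ℝ) * ⨆ i, |u i| := by rw [Finset.sum_const, nsmul_eq_mul]
  · have key := Real.inner_le_Lp_mul_Lq_of_nonneg S (f := u) (g := fun _ => 1) hc
      (fun i _ => hu i) (fun i _ => zero_le_one)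
    simp only [mul_one, Real.one_rpow, Finset.sum_const, nsmul_eq_mul] at key
    have hEq : epow (S.card : ℝ) q = (S.card : ℝ) ^ (1 / q.toReal) := by
      simp [epow, hqt]
    rw [hEq]
    have h2 : (∑ i ∈ S, u i ^ p.toReal) ^ (1 / p.toReal)
        ≤ (∑ i, |u i| ^ p.toReal) ^ (1 / p.toReal) := by
      refine Real.rpow_le_rpow (Finset.sum_nonneg fun i _ => Real.rpow_nonneg (hu i) _) ?_
        (by positivity)
      have : ∑ i ∈ S, u i ^ p.toReal = ∑ i ∈ S, |u i| ^ p.toReal :=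
        Finset.sum_congr rfl fun i _ => by rw [abs_of_nonneg (hu i)]
      rw [this]
      exact Finset.sum_le_sum_of_subset_of_nonneg (Finset.subset_univ S)
          (fun j _ _ => Real.rpow_nonneg (abs_nonneg _) _)
    have hpn : pnorm p u = (∑ i, |u i| ^ p.toReal) ^ (1 / p.toReal) := by
      simp [pnorm, hpt]
    rw [hpn]
    calc ∑ j ∈ S, u j ≤ (∑ i ∈ S, u i ^ p.toReal) ^ (1 / p.toReal)
          * (S.card : ℝ) ^ (1 / q.toReal) := key
      _ ≤ (∑ i, |u i| ^ p.toReal) ^ (1 / p.toReal) * (S.card : ℝ) ^ (1 / q.toReal) :=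
          mul_le_mul_of_nonneg_right h2 (by positivity)
      _ = (S.card : ℝ) ^ (1 / q.toReal) * (∑ i, |u i| ^ p.toReal) ^ (1 / p.toReal) := by ring


lemma norm_prod_one_add_sub_one_le {K : Type*} [NormedField K] {ι : Type*} (S : Finset ι)
    (t : ι → K) : ‖(∏ j ∈ S, (1 + t j)) - 1‖ ≤ (∏ j ∈ S, (1 + ‖t j‖)) - 1 := by
  classical
  induction S using Finset.induction_on with
  | empty => simp
  | insert a s ha ih =>
    have hP : ‖∏ j ∈ s, (1 + t j)‖ ≤ ∏ j ∈ s, (1 + ‖t j‖) := by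
      rw [norm_prod]
      exact Finset.prod_le_prod (fun j _ => norm_nonneg _)
        (fun j _ => (norm_add_le _ _).trans (by simp))
    rw [Finset.prod_insert ha, Finset.prod_insert ha]
    have hid : (1 + t a) * ∏ j ∈ s, (1 + t j) - 1
        = ((∏ j ∈ s, (1 + t j)) - 1) + t a * ∏ j ∈ s, (1 + t j) := by ring
    rw [hid]
    calc ‖((∏ j ∈ s, (1 + t j)) - 1) + t a * ∏ j ∈ s, (1 + t j)‖
        ≤ ‖(∏ j ∈ s, (1 + t j)) - 1‖ + ‖t a‖ * ‖∏ j ∈ s, (1 + t j)‖ := by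
          refine (norm_add_le _ _).trans ?_
          rw [norm_mul]
      _ ≤ ((∏ j ∈ s, (1 + ‖t j‖)) - 1) + ‖t a‖ * ∏ j ∈ s, (1 + ‖t j‖) := by
          refine add_le_add ih (mul_le_mul_of_nonneg_left hP (norm_nonneg _))
      _ = (1 + ‖t a‖) * ∏ j ∈ s, (1 + ‖t j‖) - 1 := by ring

lemma prod_one_add_le {ι : Type*} (S : Finset ι) (hS : S.Nonempty) (a : ι → ℝ)
    (ha : ∀ j ∈ S, 0 ≤ a j) :
    ∏ j ∈ S, (1 + a j) ≤ (1 + (∑ j ∈ S, a j) / S.card) ^ S.card := by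
  classical
  set m : ℝ := (S.card : ℝ) with hm
  have hm0 : (0:ℝ) < m := by rw [hm]; exact_mod_cast Finset.card_pos.mpr hS
  have hz : ∀ j ∈ S, (0:ℝ) ≤ 1 + a j := fun j hj => by linarith [ha j hj]
  have key := Real.geom_mean_le_arith_mean_weighted S (fun _ => 1 / m) (fun j => 1 + a j)
    (fun j _ => by positivity)
    (by rw [Finset.sum_const, nsmul_eq_mul, ← hm]; exact mul_one_div_cancel hm0.ne')
    hz
  have hsum : ∑ j ∈ S, (1 / m) * (1 + a j) = 1 + (∑ j ∈ S, a j) / m := by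
    rw [← Finset.mul_sum, Finset.sum_add_distrib, Finset.sum_const, nsmul_eq_mul, mul_one]
    field_simp
    rw [hm]
  rw [hsum] at key
  have hbase : (0:ℝ) ≤ ∏ j ∈ S, (1 + a j) ^ (1 / m) :=
    Finset.prod_nonneg fun j hj => Real.rpow_nonneg (hz j hj) _
  have h2 : (∏ j ∈ S, (1 + a j) ^ (1 / m)) ^ S.card
      ≤ (1 + (∑ j ∈ S, a j) / m) ^ S.card := pow_le_pow_left₀ hbase key _
  calc ∏ j ∈ S, (1 + a j) = ∏ j ∈ S, ((1 + a j) ^ (1 / m)) ^ S.card := by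
        refine Finset.prod_congr rfl fun j hj => ?_
        rw [← Real.rpow_natCast ((1 + a j) ^ (1/m)) S.card, ← Real.rpow_mul (hz j hj),
          one_div, inv_mul_cancel₀ hm0.ne', Real.rpow_one]
    _ = (∏ j ∈ S, (1 + a j) ^ (1 / m)) ^ S.card := by rw [Finset.prod_pow]
    _ ≤ (1 + (∑ j ∈ S, a j) / m) ^ S.card := h2

section Phi

lemma g_nonneg {cp cq : ℝ} (hcp : 0 < cp) {t : ℝ} (ht0 : 0 ≤ t) (ht1 : cq * t < 1) :
    0 ≤ t / (cp * (1 - cq * t)) := by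
  have : 0 < cp * (1 - cq * t) := by nlinarith
  positivity

lemma g_mono {cp cq : ℝ} (hcp : 0 < cp) (hcq : 0 < cq) {s t : ℝ} (hs : 0 ≤ s) (hst : s ≤ t)
    (ht : cq * t < 1) : s / (cp * (1 - cq * s)) ≤ t / (cp * (1 - cq * t)) := by
  have h1 : 0 < cp * (1 - cq * t) := by nlinarith
  have hcqst : cq * s ≤ cq * t := mul_le_mul_of_nonneg_left hst hcq.le
  have h2 : cp * (1 - cq * t) ≤ cp * (1 - cq * s) :=
    mul_le_mul_of_nonneg_left (by linarith) hcp.le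
  exact div_le_div₀ (hs.trans hst) hst h1 h2

lemma phi_nonneg {cp cq : ℝ} (hcp : 0 < cp) (m : ℕ) {t : ℝ} (ht0 : 0 ≤ t) (ht1 : cq * t < 1) :
    0 ≤ (1 + t / (cp * (1 - cq * t))) ^ m - 1 := by
  have hg := g_nonneg hcp ht0 ht1
  have : (1:ℝ) ≤ (1 + t / (cp * (1 - cq * t))) ^ m := one_le_pow₀ (by linarith)
  linarith

lemma phi_mono {cp cq : ℝ} (hcp : 0 < cp) (hcq : 0 < cq) (m : ℕ) {s t : ℝ} (hs : 0 ≤ s)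
    (hst : s ≤ t) (ht : cq * t < 1) :
    (1 + s / (cp * (1 - cq * s))) ^ m - 1 ≤ (1 + t / (cp * (1 - cq * t))) ^ m - 1 := by
  have hg := g_mono hcp hcq hs hst ht
  have hcqst : cq * s ≤ cq * t := mul_le_mul_of_nonneg_left hst hcq.le
  have hg0 := g_nonneg (cq := cq) hcp hs (by linarith)
  have : (1 + s / (cp * (1 - cq * s))) ^ m ≤ (1 + t / (cp * (1 - cq * t))) ^ m :=
    pow_le_pow_left₀ (by linarith) (by linarith) m
  linarith

lemma phi_quasi {cp cq : ℝ} (hcp : 0 < cp) (hcq : 0 < cq) (m : ℕ) {s t : ℝ} (hs0 : 0 ≤ s)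
    (hs1 : s ≤ 1) (ht0 : 0 ≤ t) (ht1 : cq * t < 1) :
    (1 + (s * t) / (cp * (1 - cq * (s * t)))) ^ m - 1
      ≤ s * ((1 + t / (cp * (1 - cq * t))) ^ m - 1) := by
  set u : ℝ := t / (cp * (1 - cq * t)) with hu
  have hu0 : 0 ≤ u := g_nonneg hcp ht0 ht1
  have hst0 : 0 ≤ s * t := mul_nonneg hs0 ht0
  have hstle : s * t ≤ t := mul_le_of_le_one_left ht0 hs1
  have hst1 : cq * (s * t) < 1 :=
    lt_of_le_of_lt (mul_le_mul_of_nonneg_left hstle hcq.le) ht1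
  have hd1 : 0 < cp * (1 - cq * (s * t)) := mul_pos hcp (by linarith)
  have hd2 : 0 < cp * (1 - cq * t) := mul_pos hcp (by linarith)
  have h1 : (s * t) / (cp * (1 - cq * (s * t))) ≤ s * u := by
    rw [hu, ← mul_div_assoc]
    refine div_le_div₀ hst0 le_rfl hd2 ?_
    refine mul_le_mul_of_nonneg_left ?_ hcp.le
    have : cq * (s * t) ≤ cq * t := mul_le_mul_of_nonneg_left hstle hcq.le
    linarith
  have hgst0 : 0 ≤ (s * t) / (cp * (1 - cq * (s * t))) := g_nonneg hcp hst0 hst1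
  have hconv : ConvexOn ℝ (Set.Ici 0) (fun x : ℝ => x ^ m) := convexOn_pow m
  have hcx := hconv.2 (Set.mem_Ici.mpr (by linarith : (0:ℝ) ≤ 1 + u))
    (Set.mem_Ici.mpr (zero_le_one)) hs0 (by linarith : 0 ≤ 1 - s) (by ring)
  simp only [smul_eq_mul, mul_one] at hcx
  have hcx' : (1 + s * u) ^ m ≤ s * (1 + u) ^ m + (1 - s) := by
    have harg : s * (1 + u) + (1 - s) = 1 + s * u := by ring
    rw [harg] at hcx
    simpa [one_pow] using hcx
  have h2 : (1 + (s * t) / (cp * (1 - cq * (s * t)))) ^ m ≤ (1 + s * u) ^ m :=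
    pow_le_pow_left₀ (by linarith) (by linarith) m
  nlinarith [h2, hcx']

end Phi

end WL

namespace WL

lemma dsep_facts {K : Type*} [NormedField K] {n : ℕ} (hn : 2 ≤ n) (ξ : Fin n → K)
    (hξ : Function.Injective ξ) (i : Fin n) :
    0 < dsep ξ i ∧ ∀ j, j ≠ i → dsep ξ i ≤ ‖ξ i - ξ j‖ := by
  have hnt : Nontrivial (Fin n) := Fin.nontrivial_iff_two_le.mpr hn
  set A : Set ℝ := {r : ℝ | ∃ j, j ≠ i ∧ r = ‖ξ i - ξ j‖} with hA
  have hAeq : A = (fun j => ‖ξ i - ξ j‖) '' {j | j ≠ i} := by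
    ext r
    simp only [hA, Set.mem_setOf_eq, Set.mem_image, Set.mem_setOf_eq]
    constructor
    · rintro ⟨j, hj, rfl⟩; exact ⟨j, hj, rfl⟩
    · rintro ⟨j, hj, rfl⟩; exact ⟨j, hj, rfl⟩
  have hfin : A.Finite := by
    rw [hAeq]; exact (Set.toFinite _).image _
  have hne : A.Nonempty := by
    obtain ⟨j, hj⟩ := exists_ne i
    exact ⟨‖ξ i - ξ j‖, j, hj, rfl⟩
  have hmem : sInf A ∈ A := hne.csInf_mem hfin
  have hdsep_eq : dsep ξ i = sInf A := rfl
  constructor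
  · obtain ⟨j, hj, hr⟩ := hmem
    rw [hdsep_eq, hr]
    rw [norm_pos_iff, sub_ne_zero]
    exact fun h => hj (hξ h.symm)
  · intro j hj
    rw [hdsep_eq]
    exact csInf_le hfin.bddBelow ⟨j, hj, rfl⟩

end WL

set_option maxHeartbeats 1000000

/-- local convergence theorem of the first kind for the Weierstrass method.
If `E(x⁰) = ‖(x⁰−ξ)/d(ξ)‖_p < R(n,p)`, then the Weierstrass iteration is well defined,
converges to `ξ`, with quadratic error estimates governed by `λ = φ(E(x⁰)) < 1`. -/
theorem weierstrass_local_convergence_first_kind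
    {K : Type*} [NormedField K] {n : ℕ} (hn : 2 ≤ n)
    (f : Polynomial K) (hdeg : f.natDegree = n)
    (ξ : Fin n → K) (hroot : IsRootVector f ξ) (hξ : Function.Injective ξ)
    (p q : ℝ≥0∞) (hp : 1 ≤ p) (hpq : 1 / p + 1 / q = 1)
    (E : (Fin n → K) → ℝ)
    (hE : ∀ y : Fin n → K, E y = pnorm p (fun i => ‖y i - ξ i‖ / dsep ξ i))
    (φ : ℝ → ℝ)
    (hφ : ∀ t : ℝ, φ t = (1 + t / (epow ((n : ℝ) - 1) p * (1 - epow 2 q * t))) ^ (n - 1) - 1)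
    (x : ℕ → Fin n → K)
    (hinit : E (x 0) < ((2:ℝ) ^ ((1:ℝ) / ((n:ℝ) - 1)) - 1) /
      (epow 2 q * ((2:ℝ) ^ ((1:ℝ) / ((n:ℝ) - 1)) - 1) + 1 / epow ((n : ℝ) - 1) p))
    (hiter : ∀ k : ℕ, x (k+1) = fun i => x k i - Wcorr f (x k) i) :
    (∀ k : ℕ, Function.Injective (x k)) ∧
    φ (E (x 0)) < 1 ∧
    (∀ i : Fin n, Filter.Tendsto (fun k => x k i) Filter.atTop (nhds (ξ i))) ∧
    (∀ k : ℕ, ∀ i : Fin n,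
      ‖x (k+1) i - ξ i‖ ≤ φ (E (x 0)) ^ 2 ^ k * ‖x k i - ξ i‖) ∧
    (∀ k : ℕ, ∀ i : Fin n,
      ‖x k i - ξ i‖ ≤ φ (E (x 0)) ^ (2 ^ k - 1) * ‖x 0 i - ξ i‖) := by
  -- basic numeric facts
  have hn2 : (2:ℝ) ≤ (n:ℝ) := by exact_mod_cast hn
  have hn1' : (0:ℝ) < (n:ℝ) - 1 := by linarith
  have hmcast : (((n-1 : ℕ)):ℝ) = (n:ℝ) - 1 := by
    push_cast [Nat.cast_sub (by omega : 1 ≤ n)]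
    ring
  set cp := epow ((n:ℝ)-1) p with hcp_def
  set cq := epow 2 q with hcq_def
  have hcp : 0 < cp := WL.epow_pos hn1' p
  have hcq : 0 < cq := WL.epow_pos two_pos q
  set c := (2:ℝ) ^ ((1:ℝ)/((n:ℝ)-1)) - 1 with hc_def
  have hc : 0 < c := by
    have h2 : (1:ℝ) < 2 ^ ((1:ℝ)/((n:ℝ)-1)) := by
      rw [Real.one_lt_rpow_iff_of_pos two_pos]
      exact Or.inl ⟨one_lt_two, by positivity⟩
    rw [hc_def]; linarith
  set R := c / (cq * c + 1/cp) with hR_def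
  have hden : 0 < cq * c + 1/cp := by positivity
  have hinit' : E (x 0) < R := hinit
  have hE0 : 0 ≤ E (x 0) := by rw [hE]; exact WL.pnorm_nonneg _ _
  have hR1 : cq * R < 1 := by
    rw [hR_def, ← mul_div_assoc, div_lt_one hden]
    have := one_div_pos.mpr hcp
    linarith
  have hcqt_lt : ∀ t : ℝ, t < R → cq * t < 1 := fun t ht =>
    lt_of_le_of_lt (mul_le_mul_of_nonneg_left ht.le hcq.le) hR1
  -- φ basic facts
  have phi_nn : ∀ t : ℝ, 0 ≤ t → t < R → 0 ≤ φ t := by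
    intro t h0 h1
    rw [hφ]
    exact WL.phi_nonneg hcp _ h0 (hcqt_lt t h1)
  have hpow2 : ((1:ℝ) + c) ^ (n - 1) = 2 := by
    have h1 : (1:ℝ) + c = 2 ^ ((1:ℝ)/((n:ℝ)-1)) := by rw [hc_def]; ring
    rw [h1, ← Real.rpow_natCast ((2:ℝ) ^ ((1:ℝ)/((n:ℝ)-1))) (n-1),
      ← Real.rpow_mul (by norm_num), hmcast, one_div, inv_mul_cancel₀ hn1'.ne',
      Real.rpow_one]
  have phi_lt_one : ∀ t : ℝ, 0 ≤ t → t < R → φ t < 1 := by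
    intro t ht0 htR
    have hcqt : cq * t < 1 := hcqt_lt t htR
    have hdpos : 0 < cp * (1 - cq * t) := mul_pos hcp (by linarith)
    have hRalt : R = c * cp / (cq * c * cp + 1) := by
      rw [hR_def]
      rw [div_eq_div_iff hden.ne' (by positivity : (0:ℝ) < cq*c*cp+1).ne']
      field_simp
    have hden2 : (0:ℝ) < cq * c * cp + 1 := by positivity
    have h2 : t * (cq * c * cp + 1) < c * cp := by
      rw [hRalt, lt_div_iff₀ hden2] at htR
      exact htR
    have hgt : t / (cp * (1 - cq * t)) < c := by
      rw [div_lt_iff₀ hdpos]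
      nlinarith
    have hg0 : 0 ≤ t / (cp * (1 - cq * t)) := WL.g_nonneg hcp ht0 hcqt
    have hpow : (1 + t / (cp * (1 - cq * t))) ^ (n-1) < (1 + c) ^ (n-1) := by
      refine pow_lt_pow_left₀ (by linarith) (by linarith) (by omega)
    rw [hφ]
    rw [hpow2] at hpow
    linarith
  have hl0 : 0 ≤ φ (E (x 0)) := phi_nn _ hE0 hinit'
  have hl1 : φ (E (x 0)) < 1 := phi_lt_one _ hE0 hinit'
  -- separation data
  have hdsep : ∀ i, 0 < dsep ξ i ∧ ∀ j, j ≠ i → dsep ξ i ≤ ‖ξ i - ξ j‖ :=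
    WL.dsep_facts hn ξ hξ
  -- one-step lemma
  have key : ∀ y : Fin n → K, E y < R →
      Function.Injective y ∧
        (∀ i, ‖(y i - Wcorr f y i) - ξ i‖ ≤ φ (E y) * ‖y i - ξ i‖) := by
    intro y hyR
    set u : Fin n → ℝ := fun i => ‖y i - ξ i‖ / dsep ξ i with hu_def
    have hu0 : ∀ i, 0 ≤ u i := fun i => div_nonneg (norm_nonneg _) (hdsep i).1.le
    have hEy : E y = pnorm p u := hE y
    have hEy0 : 0 ≤ E y := by rw [hEy]; exact WL.pnorm_nonneg _ _
    have hcqE : cq * E y < 1 := hcqt_lt _ hyR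
    have h1cq : 0 < 1 - cq * E y := by linarith
    have hnorm_eq : ∀ i, ‖y i - ξ i‖ = u i * dsep ξ i := fun i =>
      (div_mul_cancel₀ _ (hdsep i).1.ne').symm
    have hpair : ∀ i j, i ≠ j → u i + u j ≤ cq * E y := by
      intro i j hij
      have hS := WL.holder_sum hp hpq hu0 {i, j}
      rw [Finset.sum_pair hij, Finset.card_pair hij] at hS
      rw [hEy, hcq_def]
      exact_mod_cast hS
    have hsep : ∀ i j, i ≠ j → (1 - cq * E y) * ‖ξ i - ξ j‖ ≤ ‖y i - y j‖ := by
      intro i j hij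
      have h1 : ‖ξ i - ξ j‖ ≤ ‖y i - y j‖ + ‖y i - ξ i‖ + ‖y j - ξ j‖ := by
        have hd : ξ i - ξ j = ((y i - y j) - (y i - ξ i)) + (y j - ξ j) := by ring
        calc ‖ξ i - ξ j‖ = ‖((y i - y j) - (y i - ξ i)) + (y j - ξ j)‖ := by rw [← hd]
          _ ≤ ‖(y i - y j) - (y i - ξ i)‖ + ‖y j - ξ j‖ := norm_add_le _ _
          _ ≤ (‖y i - y j‖ + ‖y i - ξ i‖) + ‖y j - ξ j‖ :=
              add_le_add_left (norm_sub_le _ _) _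
          _ = ‖y i - y j‖ + ‖y i - ξ i‖ + ‖y j - ξ j‖ := by ring
      have h2 : ‖y i - ξ i‖ ≤ u i * ‖ξ i - ξ j‖ := by
        rw [hnorm_eq i]
        exact mul_le_mul_of_nonneg_left ((hdsep i).2 j (Ne.symm hij)) (hu0 i)
      have h3 : ‖y j - ξ j‖ ≤ u j * ‖ξ i - ξ j‖ := by
        rw [hnorm_eq j]
        have hDj : dsep ξ j ≤ ‖ξ i - ξ j‖ :=
          ((hdsep j).2 i hij).trans_eq (norm_sub_rev _ _)
        exact mul_le_mul_of_nonneg_left hDj (hu0 j)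
      have h4 := hpair i j hij
      nlinarith [mul_le_mul_of_nonneg_right h4 (norm_nonneg (ξ i - ξ j))]
    have hinj : Function.Injective y := by
      intro i j hij_eq
      by_contra hne
      have hs := hsep i j hne
      rw [hij_eq, sub_self, norm_zero] at hs
      have hpos : 0 < ‖ξ i - ξ j‖ := by
        rw [norm_pos_iff, sub_ne_zero]
        exact fun h => hne (hξ h)
      nlinarith
    refine ⟨hinj, fun i => ?_⟩
    set T := Finset.univ.erase i with hT_def
    have hTcard : T.card = n - 1 := by
      rw [hT_def, Finset.card_erase_of_mem (Finset.mem_univ i), Finset.card_univ,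
        Fintype.card_fin]
    have hTne : T.Nonempty := by
      rw [← Finset.card_pos, hTcard]; omega
    have hyij : ∀ j ∈ T, y i - y j ≠ 0 := by
      intro j hj
      refine sub_ne_zero_of_ne fun h => ?_
      exact (Finset.mem_erase.mp hj).1 (hinj h).symm
    have ha0 : f.leadingCoeff ≠ 0 := by
      refine Polynomial.leadingCoeff_ne_zero.mpr fun h => ?_
      rw [h] at hdeg; simp at hdeg; omega
    have hfy : Polynomial.eval (y i) f
        = f.leadingCoeff * ((y i - ξ i) * ∏ j ∈ T, (y i - ξ j)) := by
      rw [hroot (y i), ← Finset.mul_prod_erase Finset.univ _ (Finset.mem_univ i)]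
    have hprod_ne : ∏ j ∈ T, (y i - y j) ≠ 0 := Finset.prod_ne_zero_iff.mpr hyij
    have hWval : Wcorr f y i = (y i - ξ i) * ∏ j ∈ T, ((y i - ξ j) / (y i - y j)) := by
      unfold Wcorr
      rw [hfy, ← hT_def, mul_div_mul_left _ _ ha0, mul_div_assoc,
        ← Finset.prod_div_distrib]
    set t : Fin n → K := fun j => (y j - ξ j) / (y i - y j) with ht_def
    have hfactor : ∀ j ∈ T, (y i - ξ j) / (y i - y j) = 1 + t j := by
      intro j hj
      have hne := hyij j hj
      rw [ht_def]
      field_simp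
      ring
    have hWid : (y i - Wcorr f y i) - ξ i = (y i - ξ i) * (1 - ∏ j ∈ T, (1 + t j)) := by
      rw [hWval, Finset.prod_congr rfl hfactor]
      ring
    have hnorm1 : ‖(y i - Wcorr f y i) - ξ i‖
        = ‖y i - ξ i‖ * ‖(∏ j ∈ T, (1 + t j)) - 1‖ := by
      rw [hWid, norm_mul]
      congr 1
      exact norm_sub_rev _ _
    have htj : ∀ j ∈ T, ‖t j‖ ≤ u j / (1 - cq * E y) := by
      intro j hj
      have hji : j ≠ i := (Finset.mem_erase.mp hj).1
      have hsep' := hsep i j (Ne.symm hji)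
      have hDj : dsep ξ j ≤ ‖ξ i - ξ j‖ :=
        ((hdsep j).2 i hji.symm).trans_eq (norm_sub_rev _ _)
      have hden2 : (1 - cq * E y) * dsep ξ j ≤ ‖y i - y j‖ :=
        le_trans (mul_le_mul_of_nonneg_left hDj h1cq.le) hsep'
      have hDpos : 0 < dsep ξ j := (hdsep j).1
      have hypos : 0 < ‖y i - y j‖ := lt_of_lt_of_le (by positivity) hden2
      rw [ht_def]
      simp only
      rw [norm_div, hnorm_eq j, div_le_div_iff₀ hypos h1cq]
      calc u j * dsep ξ j * (1 - cq * E y) = u j * ((1 - cq * E y) * dsep ξ j) := by ring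
        _ ≤ u j * ‖y i - y j‖ := mul_le_mul_of_nonneg_left hden2 (hu0 j)
    have hsum_t : ∑ j ∈ T, ‖t j‖ ≤ (∑ j ∈ T, u j) / (1 - cq * E y) := by
      rw [Finset.sum_div]; exact Finset.sum_le_sum htj
    have hsum_u : ∑ j ∈ T, u j ≤ (((n:ℝ)-1) / cp) * E y := by
      have hS := WL.holder_sum hp hpq hu0 T
      rw [hTcard, hmcast, WL.epow_conj hp hpq hn1', ← hEy, ← hcp_def] at hS
      exact hS
    have hsum_bound : (∑ j ∈ T, ‖t j‖) / ((n:ℝ)-1) ≤ E y / (cp * (1 - cq * E y)) := by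
      have hA : ∑ j ∈ T, ‖t j‖ ≤ ((n:ℝ)-1) * (E y / (cp * (1 - cq * E y))) := by
        refine hsum_t.trans ?_
        have hB : (∑ j ∈ T, u j) / (1 - cq * E y)
            ≤ ((((n:ℝ)-1) / cp) * E y) / (1 - cq * E y) :=
          div_le_div₀ (mul_nonneg (by positivity) hEy0) hsum_u h1cq le_rfl
        refine hB.trans_eq ?_
        rw [div_mul_eq_mul_div, div_div, mul_div_assoc]
      rw [div_le_iff₀ hn1']
      linarith
    have hprodnorm : ∏ j ∈ T, (1 + ‖t j‖) ≤ (1 + E y / (cp * (1 - cq * E y))) ^ (n-1) := by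
      have h6 := WL.prod_one_add_le T hTne (fun j => ‖t j‖) (fun j _ => norm_nonneg _)
      rw [hTcard, hmcast] at h6
      refine h6.trans ?_
      refine pow_le_pow_left₀ (by positivity) ?_ (n-1)
      linarith [hsum_bound]
    have hfinal : ‖(∏ j ∈ T, (1 + t j)) - 1‖ ≤ φ (E y) := by
      rw [hφ]
      have h5 := WL.norm_prod_one_add_sub_one_le T t
      refine h5.trans ?_
      linarith [hprodnorm]
    rw [hnorm1, mul_comm]
    exact mul_le_mul_of_nonneg_right hfinal (norm_nonneg _)

  -- the invariant
  set lam := φ (E (x 0)) with hlam_def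
  have hEnn : ∀ k, 0 ≤ E (x k) := fun k => by rw [hE]; exact WL.pnorm_nonneg _ _
  have hstep : ∀ k : ℕ, E (x k) < R → E (x (k+1)) ≤ φ (E (x k)) * E (x k) := by
    intro k hk
    have hb := (key (x k) hk).2
    have hphik0 : 0 ≤ φ (E (x k)) := phi_nn _ (hEnn k) hk
    rw [hE (x (k+1))]
    nth_rewrite 2 [hE (x k)]
    refine WL.pnorm_le_mul (lt_of_lt_of_le (by norm_num) hn) hp hphik0 fun i => ?_
    have hDpos := (hdsep i).1
    rw [abs_of_nonneg (div_nonneg (norm_nonneg _) hDpos.le),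
      abs_of_nonneg (div_nonneg (norm_nonneg _) hDpos.le)]
    rw [hiter k]
    simp only
    rw [div_le_iff₀ hDpos, mul_assoc, div_mul_cancel₀ _ hDpos.ne']
    exact hb i
  have inv : ∀ k : ℕ, E (x k) < R ∧ φ (E (x k)) ≤ lam ^ 2 ^ k := by
    intro k
    induction k with
    | zero => exact ⟨hinit', by simp [hlam_def]⟩
    | succ k ih =>
      obtain ⟨hEk, hphik⟩ := ih
      have hphik0 : 0 ≤ φ (E (x k)) := phi_nn _ (hEnn k) hEk
      have hphik1 : φ (E (x k)) ≤ 1 :=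
        hphik.trans (pow_le_one₀ hl0 hl1.le)
      have hs := hstep k hEk
      have hmul_le : φ (E (x k)) * E (x k) ≤ E (x k) :=
        mul_le_of_le_one_left (hEnn k) hphik1
      have hEk1R : E (x (k+1)) < R := lt_of_le_of_lt (hs.trans hmul_le) hEk
      refine ⟨hEk1R, ?_⟩
      have hcqmid : cq * (φ (E (x k)) * E (x k)) < 1 :=
        hcqt_lt _ (lt_of_le_of_lt hmul_le hEk)
      have hmid : φ (E (x (k+1))) ≤ φ (φ (E (x k)) * E (x k)) := by
        rw [hφ, hφ]
        have := WL.phi_mono hcp hcq (n-1) (hEnn (k+1)) hs hcqmid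
        linarith
      have hq2 : φ (φ (E (x k)) * E (x k)) ≤ φ (E (x k)) * φ (E (x k)) := by
        have h := WL.phi_quasi hcp hcq (n-1) (s := φ (E (x k))) (t := E (x k))
          hphik0 hphik1 (hEnn k) (hcqt_lt _ hEk)
        calc φ (φ (E (x k)) * E (x k))
            = (1 + (φ (E (x k)) * E (x k)) / (cp * (1 - cq * (φ (E (x k)) * E (x k))))) ^ (n-1)
              - 1 := hφ _
          _ ≤ φ (E (x k)) * ((1 + E (x k) / (cp * (1 - cq * E (x k)))) ^ (n-1) - 1) := h
          _ = φ (E (x k)) * φ (E (x k)) := by rw [← hφ]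
      calc φ (E (x (k+1))) ≤ φ (E (x k)) * φ (E (x k)) := hmid.trans hq2
        _ ≤ lam ^ 2 ^ k * lam ^ 2 ^ k :=
            mul_le_mul hphik hphik hphik0 (pow_nonneg hl0 _)
        _ = lam ^ 2 ^ (k+1) := by
            rw [← pow_add]
            congr 1
            omega
  have est4 : ∀ k : ℕ, ∀ i : Fin n,
      ‖x (k+1) i - ξ i‖ ≤ lam ^ 2 ^ k * ‖x k i - ξ i‖ := by
    intro k i
    have hb := (key (x k) (inv k).1).2 i
    have hmain : ‖x (k+1) i - ξ i‖ ≤ φ (E (x k)) * ‖x k i - ξ i‖ := by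
      rw [hiter k]
      exact hb
    refine hmain.trans ?_
    exact mul_le_mul_of_nonneg_right (inv k).2 (norm_nonneg _)
  have est5 : ∀ k : ℕ, ∀ i : Fin n,
      ‖x k i - ξ i‖ ≤ lam ^ (2 ^ k - 1) * ‖x 0 i - ξ i‖ := by
    intro k
    induction k with
    | zero => intro i; simp
    | succ k ih =>
      intro i
      calc ‖x (k+1) i - ξ i‖ ≤ lam ^ 2 ^ k * ‖x k i - ξ i‖ := est4 k i
        _ ≤ lam ^ 2 ^ k * (lam ^ (2 ^ k - 1) * ‖x 0 i - ξ i‖) :=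
            mul_le_mul_of_nonneg_left (ih i) (pow_nonneg hl0 _)
        _ = lam ^ (2 ^ (k+1) - 1) * ‖x 0 i - ξ i‖ := by
            rw [← mul_assoc, ← pow_add]
            congr 2
            have h1 : 1 ≤ 2 ^ k := Nat.one_le_two_pow
            omega
  refine ⟨fun k => (key (x k) (inv k).1).1, hl1, ?_, est4, est5⟩
  intro i
  have hbound : ∀ k : ℕ, ‖x k i - ξ i‖ ≤ lam ^ k * ‖x 0 i - ξ i‖ := by
    intro k
    refine (est5 k i).trans ?_
    refine mul_le_mul_of_nonneg_right ?_ (norm_nonneg _)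
    refine pow_le_pow_of_le_one hl0 hl1.le ?_
    have := Nat.lt_two_pow_self (n := k)
    omega
  have htend : Filter.Tendsto (fun k : ℕ => lam ^ k * ‖x 0 i - ξ i‖)
      Filter.atTop (nhds 0) := by
    have := (tendsto_pow_atTop_nhds_zero_of_lt_one hl0 hl1).mul_const ‖x 0 i - ξ i‖
    simpa using this
  have hnorm_tend : Filter.Tendsto (fun k : ℕ => ‖x k i - ξ i‖) Filter.atTop (nhds 0) :=
    squeeze_zero (fun k => norm_nonneg _) hbound htend
  rw [tendsto_iff_norm_sub_tendsto_zero]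
  exact hnorm_tend
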